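/- Let t ≥ 1 and let G be a graph containing a set X of t+1 vertices such that every pair of vertices of X cannot be separated by an edge cut of order less than t². Then G admits a weak immersion of the complete graph K_t. -/

import Mathlib

open Sym2

/-- A finite multigraph: finite vertex and edge types, each edge has an
unordered pair of endpoints, and there are no loops. -/
structure Multigraph where
  V : Type
  E : Type
  finV : Finite V
  finE : Finite E
  ends : E → Sym2 V
  no_loops : ∀ e, ¬ (ends e).IsDiag

attribute [instance] Multigraph.finV Multigraph.finE

namespace Multigraph

/-- `IsWalk G vs es`: `vs` is the vertex sequence and `es` the edge sequence of a
walk in `G`. -/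
inductive IsWalk (G : Multigraph) : List G.V → List G.E → Prop
  | nil (v : G.V) : IsWalk G [v] []
  | cons {v : G.V} {vs : List G.V} {es : List G.E} (u : G.V) (e : G.E)
      (he : G.ends e = s(u, v)) (hw : IsWalk G (v :: vs) es) :
      IsWalk G (u :: v :: vs) (e :: es)

/-- A path from `a` to `b` in the multigraph `G`, given by its vertex sequence `vs`
and edge sequence `es`. -/
def IsPathBetween (G : Multigraph) (a b : G.V) (vs : List G.V) (es : List G.E) : Prop :=
  G.IsWalk vs es ∧ vs.Nodup ∧ vs.head? = some a ∧ vs.getLast? = some b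

/-- A weak immersion of `H` into `G`. -/
structure WeakImmersion (H G : Multigraph) where
  vmap : H.V → G.V
  vmap_inj : Function.Injective vmap
  pverts : H.E → List G.V
  pedges : H.E → List G.E
  is_path : ∀ f : H.E, ∃ x y : H.V, H.ends f = s(x, y) ∧
    G.IsPathBetween (vmap x) (vmap y) (pverts f) (pedges f)
  edge_disjoint : ∀ f f' : H.E, f ≠ f' → ∀ e, e ∈ pedges f → e ∉ pedges f'

/-- `G.Immerses H`: `G` admits a weak immersion of `H`. -/
def Immerses (G H : Multigraph) : Prop := Nonempty (WeakImmersion H G)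

/-- The degree of a vertex: the number of edges incident with it. -/
noncomputable def degree (G : Multigraph) (v : G.V) : ℕ :=
  Nat.card {e : G.E // v ∈ G.ends e}

/-- The edge cut `δ(U)`: edges with exactly one endpoint in `U`. -/
def edgeCut (G : Multigraph) (U : Set G.V) : Set G.E :=
  {e | ∃ a b, G.ends e = s(a, b) ∧ a ∈ U ∧ b ∉ U}

/-- There exist `k` pairwise edge-disjoint paths from `a` to `b` in `G`. -/
def EdgeDisjointPaths (G : Multigraph) (a b : G.V) (k : ℕ) : Prop :=
  ∃ (vs : Fin k → List G.V) (es : Fin k → List G.E),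
    (∀ i, G.IsPathBetween a b (vs i) (es i)) ∧
    ∀ i j, i ≠ j → ∀ e, e ∈ es i → e ∉ es j

/-- Isomorphism of multigraphs. -/
structure Iso (G H : Multigraph) where
  vmap : G.V ≃ H.V
  emap : G.E ≃ H.E
  ends_map : ∀ e, H.ends (emap e) = Sym2.map vmap (G.ends e)

/-- The complete graph `K_t` as a multigraph. -/
def completeGraph (t : ℕ) : Multigraph where
  V := Fin t
  E := {p : Sym2 (Fin t) // ¬ p.IsDiag}
  finV := inferInstance
  finE := inferInstance
  ends := Subtype.val
  no_loops := fun e => e.prop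

/-- The multigraph `S_{k,n}`: vertices `x_1, …, x_n, y` (with `y = none`) and `k`
parallel edges from each `x_i` to `y`. -/
def star (k n : ℕ) : Multigraph where
  V := Option (Fin n)
  E := Fin n × Fin k
  finV := inferInstance
  finE := inferInstance
  ends := fun p => s(some p.1, none)
  no_loops := fun p => by simp [Sym2.mk_isDiag_iff]

/-! ### Edge sums -/

/-- A witness that `G` is a `k`-edge sum of `G₁` and `G₂`. -/
structure EdgeSumWitness (k : ℕ) (G G₁ G₂ : Multigraph) where
  v₁ : G₁.V
  v₂ : G₂.V
  deg₁ : G₁.degree v₁ = k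
  deg₂ : G₂.degree v₂ = k
  π : {e : G₁.E // v₁ ∈ G₁.ends e} ≃ {e : G₂.E // v₂ ∈ G₂.ends e}
  α : G.V ≃ {x : G₁.V // x ≠ v₁} ⊕ {y : G₂.V // y ≠ v₂}
  β : G.E ≃ ({e : G₁.E // v₁ ∉ G₁.ends e} ⊕ {e : G₂.E // v₂ ∉ G₂.ends e}) ⊕
      {e : G₁.E // v₁ ∈ G₁.ends e}
  ends₁ : ∀ (e : {e : G₁.E // v₁ ∉ G₁.ends e}) (x y : G₁.V) (hx : x ≠ v₁) (hy : y ≠ v₁),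
    G₁.ends e.val = s(x, y) →
      G.ends (β.symm (Sum.inl (Sum.inl e))) = s(α.symm (Sum.inl ⟨x, hx⟩), α.symm (Sum.inl ⟨y, hy⟩))
  ends₂ : ∀ (e : {e : G₂.E // v₂ ∉ G₂.ends e}) (x y : G₂.V) (hx : x ≠ v₂) (hy : y ≠ v₂),
    G₂.ends e.val = s(x, y) →
      G.ends (β.symm (Sum.inl (Sum.inr e))) = s(α.symm (Sum.inr ⟨x, hx⟩), α.symm (Sum.inr ⟨y, hy⟩))
  ends₃ : ∀ (e : {e : G₁.E // v₁ ∈ G₁.ends e}) (x : G₁.V) (y : G₂.V) (hx : x ≠ v₁) (hy : y ≠ v₂),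
    G₁.ends e.val = s(x, v₁) → G₂.ends (π e).val = s(y, v₂) →
      G.ends (β.symm (Sum.inr e)) = s(α.symm (Sum.inl ⟨x, hx⟩), α.symm (Sum.inr ⟨y, hy⟩))

/-- `G` is a `k`-edge sum of `G₁` and `G₂`. -/
def IsEdgeSum (k : ℕ) (G G₁ G₂ : Multigraph) : Prop :=
  Nonempty (EdgeSumWitness k G G₁ G₂)

/-- The edge sum is grounded. -/
def EdgeSumWitness.Grounded {k : ℕ} {G G₁ G₂ : Multigraph}
    (w : EdgeSumWitness k G G₁ G₂) : Prop :=
  (∃ v', v' ≠ w.v₁ ∧ G₁.EdgeDisjointPaths w.v₁ v' k) ∧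
  (∃ v', v' ≠ w.v₂ ∧ G₂.EdgeDisjointPaths w.v₂ v' k)

/-- `G` is a grounded `k`-edge sum of `G₁` and `G₂`. -/
def IsGroundedEdgeSum (k : ℕ) (G G₁ G₂ : Multigraph) : Prop :=
  ∃ w : EdgeSumWitness k G G₁ G₂, w.Grounded

/-! ### Auxiliary simple-graph operations -/

/-- Delete the vertex `t` from `T` (keeping it as an isolated vertex). -/
def delAt {τ : Type} (T : SimpleGraph τ) (t : τ) : SimpleGraph τ where
  Adj a b := T.Adj a b ∧ a ≠ t ∧ b ≠ t
  symm := ⟨fun a b h => ⟨h.1.symm, h.2.2, h.2.1⟩⟩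
  loopless := ⟨fun a h => T.loopless.irrefl a h.1⟩

lemma reach_delAt {τ : Type} (T : SimpleGraph τ) (t : τ) {a b : τ} (q : T.Walk a b)
    (ht : t ∉ q.support) : (delAt T t).Reachable a b := by
  induction q with
  | nil => exact SimpleGraph.Reachable.refl _
  | @cons u v w h p ih =>
      simp only [SimpleGraph.Walk.support_cons, List.mem_cons] at ht
      push_neg at ht
      have hv : v ≠ t := fun hv => ht.2 (hv ▸ p.start_mem_support)
      exact (SimpleGraph.Adj.reachable (G := delAt T t) (show (delAt T t).Adj u v from ⟨h, Ne.symm ht.1, hv⟩)).trans (ih ht.2)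

/-! ### Tree-cut decompositions -/

/-- A tree-cut decomposition of the multigraph `G`. -/
structure TreeCutDecomp (G : Multigraph) where
  T : Type
  finT : Finite T
  tree : SimpleGraph T
  isTree : tree.IsTree
  bag : T → Set G.V
  disj : ∀ s t : T, s ≠ t → Disjoint (bag s) (bag t)
  covers : ∀ v : G.V, ∃ t : T, v ∈ bag t

attribute [instance] TreeCutDecomp.finT

variable {G : Multigraph}

/-- The union of the bags on the `v`-side of the tree edge `uv`. -/
def TreeCutDecomp.sideSet (D : TreeCutDecomp G) (u v : D.T) : Set G.V :=
  {x | ∃ s, (D.tree.deleteEdges {s(u, v)}).Reachable v s ∧ x ∈ D.bag s}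

/-- The adhesion of a tree-cut decomposition. -/
noncomputable def TreeCutDecomp.adhesion (D : TreeCutDecomp G) : ℕ :=
  sSup {n | ∃ u v : D.T, D.tree.Adj u v ∧ n = (G.edgeCut (D.sideSet u v)).ncard}

lemma TreeCutDecomp.exists_periph (D : TreeCutDecomp G) (t : D.T) (v : G.V)
    (hv : v ∉ D.bag t) :
    ∃ u : D.T, D.tree.Adj t u ∧ ∃ s, v ∈ D.bag s ∧ (delAt D.tree t).Reachable s u := by
  classical
  obtain ⟨s, hs⟩ := D.covers v
  have hst : t ≠ s := fun h => hv (h ▸ hs)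
  obtain ⟨w⟩ := D.isTree.isConnected.preconnected t s
  obtain ⟨x, hadj, q, hq⟩ := SimpleGraph.Walk.exists_eq_cons_of_ne hst w.toPath.val
  have hP : (SimpleGraph.Walk.cons hadj q).IsPath := hq ▸ w.toPath.prop
  rw [SimpleGraph.Walk.cons_isPath_iff] at hP
  exact ⟨x, hadj, s, hs, (reach_delAt D.tree t q hP.2).symm⟩

open Classical in
/-- The map from `G` to the vertices of the torso at `t`. -/
noncomputable def TreeCutDecomp.proj (D : TreeCutDecomp G) (t : D.T) (v : G.V) :
    ↥(D.bag t) ⊕ {u : D.T // D.tree.Adj t u} :=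
  if hv : v ∈ D.bag t then Sum.inl ⟨v, hv⟩
  else Sum.inr ⟨(D.exists_periph t v hv).choose, (D.exists_periph t v hv).choose_spec.1⟩

/-- The torso of `G` at a node `t` of a tree-cut decomposition. -/
noncomputable def TreeCutDecomp.torso (D : TreeCutDecomp G) (t : D.T) : Multigraph where
  V := ↥(D.bag t) ⊕ {u : D.T // D.tree.Adj t u}
  E := {e : G.E // ¬ (Sym2.map (D.proj t) (G.ends e)).IsDiag}
  finV := inferInstance
  finE := inferInstance
  ends := fun e => Sym2.map (D.proj t) (G.ends e.val)
  no_loops := fun e => e.prop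

/-- The core vertices of the torso at `t`. -/
def TreeCutDecomp.torsoCore (D : TreeCutDecomp G) (t : D.T) : Set (D.torso t).V :=
  Set.range Sum.inl

/-! ### The 3-center and tree-cut width -/

/-- Condition (1): the immersion of `H` in `G` covers `X` and every vertex of `H`
of degree at most two is mapped into `X`. -/
def CenterCond (G : Multigraph) (X : Set G.V) (H : Multigraph) (I : WeakImmersion H G) : Prop :=
  X ⊆ Set.range I.vmap ∧ ∀ x : H.V, H.degree x ≤ 2 → I.vmap x ∈ X

/-- `C` is a 3-center of `(G, X)`: it admits an immersion in `G` satisfying (1) and is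
maximal with respect to immersion containment among all such graphs. -/
def IsThreeCenter (G : Multigraph) (X : Set G.V) (C : Multigraph) : Prop :=
  (∃ I : WeakImmersion C G, CenterCond G X C I) ∧
  ∀ H : Multigraph, (∃ I : WeakImmersion H G, CenterCond G X H I) → C.Immerses H

/-- The number of vertices of the 3-center of `(G, X)`. -/
noncomputable def threeCenterCard (G : Multigraph) (X : Set G.V) : ℕ :=
  sSup {n | ∃ C : Multigraph, IsThreeCenter G X C ∧ Nat.card C.V = n}

/-- The width of a tree-cut decomposition. -/
noncomputable def TreeCutDecomp.width (D : TreeCutDecomp G) : ℕ :=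
  max D.adhesion (sSup {n | ∃ t : D.T, n = threeCenterCard (D.torso t) (D.torsoCore t)})

/-- The tree-cut width of a multigraph. -/
noncomputable def tcw (G : Multigraph) : ℕ :=
  sInf {w | ∃ D : TreeCutDecomp G, D.width = w}

/-! ### Tree decompositions and tree-width -/

/-- A tree decomposition of the multigraph `G`. -/
structure TreeDecomp (G : Multigraph) where
  T : Type
  finT : Finite T
  tree : SimpleGraph T
  isTree : tree.IsTree
  bag : T → Set G.V
  covers_v : ∀ v : G.V, ∃ t : T, v ∈ bag t
  covers_e : ∀ e : G.E, ∃ (t : T) (x y : G.V), G.ends e = s(x, y) ∧ x ∈ bag t ∧ y ∈ bag t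
  connected : ∀ v : G.V, (SimpleGraph.induce {t : T | v ∈ bag t} tree).Connected

/-- The tree-width of a multigraph. -/
noncomputable def treewidth (G : Multigraph) : ℕ :=
  sInf {n | ∃ D : TreeDecomp G, ∀ t : D.T, (D.bag t).ncard ≤ n + 1}

/-! ### Walls and grids -/

def wallStep (r : ℕ) (a b : Fin r × Fin r) : Prop :=
  (a.1 = b.1 ∧ a.2.val + 1 = b.2.val) ∨
  (a.2 = b.2 ∧ a.1.val + 1 = b.1.val ∧ (a.1.val + 1) % 2 = (a.2.val + 1) % 2)

def wallAdj (r : ℕ) (a b : Fin r × Fin r) : Prop := wallStep r a b ∨ wallStep r b a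

lemma wallStep_ne {r : ℕ} {a b : Fin r × Fin r} (h : wallStep r a b) : a ≠ b := by
  rintro rfl
  rcases h with ⟨-, h⟩ | ⟨-, h, -⟩ <;> omega

/-- The `r`-wall `H_r`. -/
def wall (r : ℕ) : Multigraph where
  V := Fin r × Fin r
  E := {q : Sym2 (Fin r × Fin r) // ∃ a b, q = s(a, b) ∧ wallAdj r a b}
  finV := inferInstance
  finE := inferInstance
  ends := Subtype.val
  no_loops := by
    rintro ⟨q, a, b, rfl, hab⟩ hd
    rw [Sym2.mk_isDiag_iff] at hd
    subst hd
    rcases hab with h | h <;> exact wallStep_ne h rfl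

def gridStep (r : ℕ) (a b : Fin r × Fin r) : Prop :=
  (a.1 = b.1 ∧ a.2.val + 1 = b.2.val) ∨ (a.2 = b.2 ∧ a.1.val + 1 = b.1.val)

def gridAdj (r : ℕ) (a b : Fin r × Fin r) : Prop := gridStep r a b ∨ gridStep r b a

lemma gridStep_ne {r : ℕ} {a b : Fin r × Fin r} (h : gridStep r a b) : a ≠ b := by
  rintro rfl
  rcases h with ⟨-, h⟩ | ⟨-, h⟩ <;> omega

/-- The `r × r` grid. -/
def grid (r : ℕ) : Multigraph where
  V := Fin r × Fin r
  E := {q : Sym2 (Fin r × Fin r) // ∃ a b, q = s(a, b) ∧ gridAdj r a b}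
  finV := inferInstance
  finE := inferInstance
  ends := Subtype.val
  no_loops := by
    rintro ⟨q, a, b, rfl, hab⟩ hd
    rw [Sym2.mk_isDiag_iff] at hd
    subst hd
    rcases hab with h | h <;> exact gridStep_ne h rfl

/-! ### Subdivisions and minors -/

/-- `G` contains `H` as a subdivision: an immersion whose composite paths pairwise
meet only in common endpoints. -/
def ContainsSubdivision (G H : Multigraph) : Prop :=
  ∃ I : WeakImmersion H G, ∀ f f' : H.E, f ≠ f' → ∀ v : G.V,
    v ∈ I.pverts f → v ∈ I.pverts f' →
      ((I.pverts f).head? = some v ∨ (I.pverts f).getLast? = some v) ∧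
      ((I.pverts f').head? = some v ∨ (I.pverts f').getLast? = some v)

/-- A set of vertices is connected in `G`. -/
def ConnectedIn (G : Multigraph) (B : Set G.V) : Prop :=
  B.Nonempty ∧ ∀ a ∈ B, ∀ b ∈ B, ∃ (vs : List G.V) (es : List G.E),
    G.IsWalk vs es ∧ vs.head? = some a ∧ vs.getLast? = some b ∧ ∀ v ∈ vs, v ∈ B

/-- `G` contains `H` as a minor. -/
def HasMinor (G H : Multigraph) : Prop :=
  ∃ B : H.V → Set G.V,
    (∀ x, G.ConnectedIn (B x)) ∧
    (∀ x y, x ≠ y → Disjoint (B x) (B y)) ∧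
    ∃ η : H.E → G.E, Function.Injective η ∧
      ∀ (f : H.E) (x y : H.V), H.ends f = s(x, y) →
        ∃ a b, G.ends (η f) = s(a, b) ∧ a ∈ B x ∧ b ∈ B y

/-! ### Subgraphs, splitting off, suppression -/

/-- `A` is (isomorphic to) a subgraph of `G`. -/
def IsSubgraph (A G : Multigraph) : Prop :=
  ∃ (fv : A.V → G.V) (fe : A.E → G.E), Function.Injective fv ∧ Function.Injective fe ∧
    ∀ e, G.ends (fe e) = Sym2.map fv (A.ends e)

/-- `B` is obtained from `A` by splitting off a pair of incident edges. -/
def SplitOffRel (A B : Multigraph) : Prop :=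
  ∃ (e₁ e₂ : A.E) (x y z : A.V), e₁ ≠ e₂ ∧ x ≠ z ∧
    A.ends e₁ = s(x, y) ∧ A.ends e₂ = s(y, z) ∧
    ∃ (fV : A.V ≃ B.V) (fE : {e : A.E // e ≠ e₁ ∧ e ≠ e₂} ⊕ Unit ≃ B.E),
      (∀ e : {e : A.E // e ≠ e₁ ∧ e ≠ e₂},
        B.ends (fE (Sum.inl e)) = Sym2.map fV (A.ends e.val)) ∧
      B.ends (fE (Sum.inr ())) = s(fV x, fV z)

/-- `B` is obtained from `A` by suppressing a vertex of degree two (contracting one of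
its incident edges and deleting any resulting loops). -/
def SuppressTwoRel (A B : Multigraph) : Prop :=
  ∃ v : A.V, A.degree v = 2 ∧
    ∃ σ : A.V → B.V,
      (∀ x y, x ≠ v → y ≠ v → (σ x = σ y ↔ x = y)) ∧
      (∀ y : B.V, ∃ x, x ≠ v ∧ σ x = y) ∧
      (∃ a, a ≠ v ∧ (∃ e, A.ends e = s(v, a)) ∧ σ v = σ a) ∧
      ∃ τ : {e : A.E // ¬ (Sym2.map σ (A.ends e)).IsDiag} ≃ B.E,
        ∀ e, B.ends (τ e) = Sym2.map σ (A.ends e.val)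

/-- A multigraph together with a marked set of vertices. -/
structure MarkedGraph where
  G : Multigraph
  X : Set G.V

/-- One step of suppressing a vertex outside the marked set of degree at most two
(for degree zero this deletes the vertex). -/
def SuppressStep (A B : MarkedGraph) : Prop :=
  ∃ v : A.G.V, v ∉ A.X ∧ A.G.degree v ≤ 2 ∧
    ∃ σ : A.G.V → B.G.V,
      (∀ x y, x ≠ v → y ≠ v → (σ x = σ y ↔ x = y)) ∧
      (∀ y : B.G.V, ∃ x, x ≠ v ∧ σ x = y) ∧
      B.X = {y | ∃ x, x ∈ A.X ∧ σ x = y} ∧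
      (1 ≤ A.G.degree v → ∃ a, a ≠ v ∧ (∃ e, A.G.ends e = s(v, a)) ∧ σ v = σ a) ∧
      ∃ τ : {e : A.G.E // ¬ (Sym2.map σ (A.G.ends e)).IsDiag} ≃ B.G.E,
        ∀ e, B.G.ends (τ e) = Sym2.map σ (A.G.ends e.val)

/-! ### Trees and cycles as multigraphs -/

/-- A multigraph is a tree if it corresponds to a simple tree on its vertex set. -/
def IsTreeGraph (G : Multigraph) : Prop :=
  ∃ S : SimpleGraph G.V, S.IsTree ∧ ∃ φ : G.E ≃ S.edgeSet, ∀ e, (φ e : Sym2 G.V) = G.ends e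

/-- The cycle on `n + 3` vertices. -/
def cycleGraph (n : ℕ) : Multigraph where
  V := Fin (n + 3)
  E := Fin (n + 3)
  finV := inferInstance
  finE := inferInstance
  ends := fun i => s(i, i + 1)
  no_loops := by
    intro i hd
    rw [Sym2.mk_isDiag_iff] at hd
    have h1 : (i : Fin (n + 3)) + 0 = i + 1 := by simpa using hd
    have h01 : (0 : Fin (n + 3)) = 1 := add_left_cancel h1
    have := congrArg Fin.val h01
    simp [Fin.val_one] at this

/-- A matching in a multigraph: a set of pairwise vertex-disjoint edges. -/
def IsMatching (G : Multigraph) (M : Set G.E) : Prop :=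
  ∀ e ∈ M, ∀ e' ∈ M, e ≠ e' → ∀ v : G.V, v ∈ G.ends e → v ∉ G.ends e'

end Multigraph

/-! ### Auxiliary development for Statement 1 -/

namespace MGAux

open Multigraph

open scoped Classical

noncomputable local instance (G : Multigraph) : Fintype G.E := Fintype.ofFinite _
noncomputable local instance (G : Multigraph) : Fintype G.V := Fintype.ofFinite _

lemma sym2_rep {α : Type*} (q : Sym2 α) : ∃ x y, q = s(x, y) := by
  induction q using Sym2.ind with | _ x y => exact ⟨x, y, rfl⟩

variable {G : Multigraph}

noncomputable def efst (e : G.E) : G.V := (sym2_rep (G.ends e)).choose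
noncomputable def esnd (e : G.E) : G.V :=
  (sym2_rep (G.ends e)).choose_spec.choose

lemma ends_eq (e : G.E) : G.ends e = s(efst e, esnd e) :=
  (sym2_rep (G.ends e)).choose_spec.choose_spec

lemma efst_ne_esnd (e : G.E) : efst e ≠ esnd e := by
  have h := G.no_loops e
  rw [ends_eq e] at h
  simpa using h

/-- endpoints of an edge with given `ends` representation -/
lemma ends_cases {e : G.E} {u v : G.V} (h : G.ends e = s(u, v)) :
    (efst e = u ∧ esnd e = v) ∨ (efst e = v ∧ esnd e = u) := by
  rw [ends_eq e] at h
  rw [Sym2.eq_iff] at h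
  tauto

/-! ### Flows -/

noncomputable def charge (f : G.E → Option Bool) (e : G.E) (v : G.V) : ℤ :=
  match f e with
  | none => 0
  | some true => (if efst e = v then 1 else 0) - (if esnd e = v then 1 else 0)
  | some false => (if esnd e = v then 1 else 0) - (if efst e = v then 1 else 0)

noncomputable def bal (f : G.E → Option Bool) (v : G.V) : ℤ := ∑ e, charge f e v

lemma charge_none {f : G.E → Option Bool} {e : G.E} (h : f e = none) (v : G.V) :
    charge f e v = 0 := by simp [charge, h]

lemma charge_true {f : G.E → Option Bool} {e : G.E} (h : f e = some true) (v : G.V) :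
    charge f e v = (if efst e = v then 1 else 0) - (if esnd e = v then 1 else 0) := by
  simp [charge, h]

lemma charge_false {f : G.E → Option Bool} {e : G.E} (h : f e = some false) (v : G.V) :
    charge f e v = (if esnd e = v then 1 else 0) - (if efst e = v then 1 else 0) := by
  simp [charge, h]

lemma bal_congr {f g : G.E → Option Bool} (h : ∀ e, f e = g e) (v : G.V) :
    bal f v = bal g v := by
  unfold bal
  apply Finset.sum_congr rfl
  intro e _
  unfold charge
  rw [h e]

lemma bal_diff_single {f g : G.E → Option Bool} (e : G.E)
    (h : ∀ e', e' ≠ e → f e' = g e') (v : G.V) :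
    bal g v = bal f v + (charge g e v - charge f e v) := by
  unfold bal
  rw [← Finset.sum_erase_add _ _ (Finset.mem_univ e),
      ← Finset.sum_erase_add _ (fun e' => charge f e' v) (Finset.mem_univ e)]
  have : ∀ e' ∈ Finset.univ.erase e, charge g e' v = charge f e' v := by
    intro e' he'
    unfold charge
    rw [h e' (Finset.mem_erase.1 he').1]
  rw [Finset.sum_congr rfl this]
  ring

/-- residual step from `u` to `v` along `e` -/
def Rstep (f : G.E → Option Bool) (u v : G.V) (e : G.E) : Prop :=
  (f e = none ∧ G.ends e = s(u, v)) ∨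
  (f e = some true ∧ esnd e = u ∧ efst e = v) ∨
  (f e = some false ∧ efst e = u ∧ esnd e = v)

def Rrel (f : G.E → Option Bool) (u v : G.V) : Prop := ∃ e, Rstep f u v e

lemma Rstep.ends_eq' {f : G.E → Option Bool} {u v : G.V} {e : G.E}
    (h : Rstep f u v e) : G.ends e = s(u, v) := by
  rcases h with ⟨-, h⟩ | ⟨-, h1, h2⟩ | ⟨-, h1, h2⟩
  · exact h
  · rw [ends_eq e, h1, h2]; exact Sym2.eq_swap
  · rw [ends_eq e, h1, h2]

lemma Rstep.ne {f : G.E → Option Bool} {u v : G.V} {e : G.E}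
    (h : Rstep f u v e) : u ≠ v := by
  have h2 := G.no_loops e
  rw [h.ends_eq'] at h2
  simpa using h2

/-- augmenting update along a residual step -/
noncomputable def updStep (f : G.E → Option Bool) (u : G.V) (e : G.E) :
    G.E → Option Bool :=
  Function.update f e
    (if f e = none then (if efst e = u then some true else some false) else none)

lemma updStep_apply_ne (f : G.E → Option Bool) (u : G.V) (e e' : G.E) (h : e' ≠ e) :
    updStep f u e e' = f e' := Function.update_of_ne h _ f

lemma charge_updStep {f : G.E → Option Bool} {u v : G.V} {e : G.E}
    (h : Rstep f u v e) (w : G.V) :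
    charge (updStep f u e) e w =
      charge f e w + ((if u = w then 1 else 0) - (if v = w then 1 else 0)) := by
  have hne : u ≠ v := h.ne
  rcases h with ⟨h0, hends⟩ | ⟨h0, h1, h2⟩ | ⟨h0, h1, h2⟩
  · rcases ends_cases hends with ⟨ha, hb⟩ | ⟨ha, hb⟩
    · have : updStep f u e e = some true := by
        unfold updStep; rw [Function.update_self, if_pos h0, if_pos ha]
      unfold charge
      rw [this, h0, ha, hb]
      simp only []
      by_cases h1 : u = w <;> by_cases h2 : v = w <;> simp [h1, h2] <;> omega
    · have : updStep f u e e = some false := by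
        unfold updStep
        rw [Function.update_self, if_pos h0]
        rw [ha]
        rw [if_neg (Ne.symm hne)]
      unfold charge
      rw [this, h0, ha, hb]
      by_cases h1 : u = w <;> by_cases h2 : v = w <;> simp [h1, h2]
  · have : updStep f u e e = none := by
      unfold updStep; rw [Function.update_self, if_neg (by rw [h0]; simp)]
    unfold charge
    rw [this, h0, h1, h2]
    by_cases hx : u = w <;> by_cases hy : v = w <;> simp [hx, hy] <;> omega
  · have : updStep f u e e = none := by
      unfold updStep; rw [Function.update_self, if_neg (by rw [h0]; simp)]
    unfold charge
    rw [this, h0, h1, h2]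
    by_cases hx : u = w <;> by_cases hy : v = w <;> simp [hx, hy] <;> omega

lemma bal_updStep {f : G.E → Option Bool} {u v : G.V} {e : G.E}
    (h : Rstep f u v e) (w : G.V) :
    bal (updStep f u e) w =
      bal f w + ((if u = w then 1 else 0) - (if v = w then 1 else 0)) := by
  rw [bal_diff_single e (fun e' he' => updStep_apply_ne f u e e' he') w,
      charge_updStep h w]
  ring

end MGAux

namespace MGAux

open Multigraph

open scoped Classical

noncomputable local instance (G : Multigraph) : Fintype G.E := Fintype.ofFinite _
noncomputable local instance (G : Multigraph) : Fintype G.V := Fintype.ofFinite _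

variable {G : Multigraph}

inductive RChain (f : G.E → Option Bool) : G.V → List (G.V × G.E) → Prop
  | nil (v : G.V) : RChain f v []
  | cons {u v : G.V} {e : G.E} {rest : List (G.V × G.E)}
      (h : Rstep f u v e) (hr : RChain f v rest) : RChain f u ((v, e) :: rest)

def lastV : G.V → List (G.V × G.E) → G.V
  | u, [] => u
  | _, (v, _) :: L => lastV v L

lemma exists_chain {f : G.E → Option Bool} {a b : G.V}
    (h : Relation.ReflTransGen (Rrel f) a b) :
    ∃ L, RChain f a L ∧ lastV a L = b := by
  induction h using Relation.ReflTransGen.head_induction_on with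
  | refl => exact ⟨[], RChain.nil _, rfl⟩
  | head hstep _ ih =>
      obtain ⟨e, he⟩ := hstep
      obtain ⟨L, hL, hlast⟩ := ih
      exact ⟨(_, e) :: L, RChain.cons he hL, hlast⟩

/-- if `a` occurs among step-vertices, extract a strictly shorter chain from `a` -/
lemma chain_suffix {f : G.E → Option Bool} :
    ∀ {L : List (G.V × G.E)} {u a : G.V}, RChain f u L → a ∈ L.map Prod.fst →
    ∃ L', RChain f a L' ∧ lastV a L' = lastV u L ∧ L'.length < L.length ∧
      ∀ w ∈ L'.map Prod.fst, w ∈ L.map Prod.fst := by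
  intro L
  induction L with
  | nil => intro u a _ ha; simp at ha
  | cons p rest ih =>
      intro u a hc ha
      obtain ⟨v, e⟩ := p
      cases hc with
      | cons hstep hrest =>
        by_cases hmem : a ∈ rest.map Prod.fst
        · obtain ⟨L', h1, h2, h3, h4⟩ := ih hrest hmem
          refine ⟨L', h1, h2, by simpa using Nat.lt_succ_of_lt h3, ?_⟩
          intro w hw
          simp only [List.map_cons, List.mem_cons]
          exact Or.inr (h4 w hw)
        · have hav : a = v := by
            simp only [List.map_cons, List.mem_cons] at ha
            tauto
          subst hav
          exact ⟨rest, hrest, rfl, Nat.lt_succ_self _, fun w hw => by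
            simp only [List.map_cons, List.mem_cons]; exact Or.inr hw⟩

/-- prune a chain to a vertex-nodup chain -/
lemma chain_prune {f : G.E → Option Bool} :
    ∀ n {L : List (G.V × G.E)} {u : G.V}, L.length ≤ n → RChain f u L →
    ∃ L', RChain f u L' ∧ lastV u L' = lastV u L ∧
      (u :: L'.map Prod.fst).Nodup ∧
      ∀ w ∈ L'.map Prod.fst, w ∈ L.map Prod.fst := by
  intro n
  induction n with
  | zero =>
      intro L u hlen hc
      have : L = [] := List.length_eq_zero_iff.1 (Nat.le_zero.1 hlen)
      subst this
      exact ⟨[], RChain.nil u, rfl, by simp, by simp⟩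
  | succ n ih =>
      intro L u hlen hc
      by_cases hmem : u ∈ L.map Prod.fst
      · obtain ⟨L', h1, h2, h3, h4⟩ := chain_suffix hc hmem
        obtain ⟨L'', g1, g2, g3, g4⟩ := ih (by omega) h1
        exact ⟨L'', g1, by rw [g2, h2], g3, fun w hw => h4 w (g4 w hw)⟩
      · cases hc with
        | nil => exact ⟨[], RChain.nil u, rfl, by simp, by simp⟩
        | @cons _ v e rest hstep hrest =>
            have hlen' : rest.length ≤ n := by simp at hlen; omega
            obtain ⟨L'', g1, g2, g3, g4⟩ := ih hlen' hrest
            refine ⟨(v, e) :: L'', RChain.cons hstep g1, by simpa [lastV] using g2, ?_, ?_⟩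
            · rw [List.map_cons, List.nodup_cons]
              constructor
              · intro hu
                rcases List.mem_cons.1 hu with hu | hu
                · exact hmem (by simp [hu])
                · refine hmem ?_
                  simp only [List.map_cons, List.mem_cons]
                  exact Or.inr (g4 u hu)
              · exact g3
            · intro w hw
              simp only [List.map_cons, List.mem_cons] at hw ⊢
              rcases hw with hw | hw
              · exact Or.inl hw
              · exact Or.inr (g4 w hw)

/-- every step of a chain has its edge's endpoints among the chain's vertices -/
lemma rchain_step_ends {f : G.E → Option Bool} :
    ∀ {L : List (G.V × G.E)} {u : G.V}, RChain f u L →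
    ∀ p ∈ L, ∃ w, w ∈ u :: L.map Prod.fst ∧ p.1 ∈ u :: L.map Prod.fst ∧
      G.ends p.2 = s(w, p.1) := by
  intro L
  induction L with
  | nil => intro u _ p hp; simp at hp
  | cons q rest ih =>
      intro u hc p hp
      obtain ⟨v, e⟩ := q
      cases hc with
      | cons hstep hrest =>
        simp only [List.mem_cons] at hp
        rcases hp with rfl | hp
        · exact ⟨u, by simp, by simp, hstep.ends_eq'⟩
        · obtain ⟨w, hw1, hw2, hw3⟩ := ih hrest p hp
          refine ⟨w, ?_, ?_, hw3⟩
          · simp only [List.map_cons, List.mem_cons] at hw1 ⊢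
            tauto
          · simp only [List.map_cons, List.mem_cons] at hw2 ⊢
            tauto

lemma rchain_congr {f f' : G.E → Option Bool} :
    ∀ {L : List (G.V × G.E)} {u : G.V}, RChain f u L →
    (∀ p ∈ L, f' p.2 = f p.2) → RChain f' u L := by
  intro L
  induction L with
  | nil => intro u _ _; exact RChain.nil u
  | cons q rest ih =>
      intro u hc hagree
      obtain ⟨v, e⟩ := q
      cases hc with
      | cons hstep hrest =>
        refine RChain.cons ?_ (ih hrest (fun p hp => hagree p (by simp [hp])))
        unfold Rstep at hstep ⊢
        rw [hagree (v, e) (by simp)]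
        exact hstep

/-- augmentation along a vertex-nodup residual chain -/
lemma augment :
    ∀ {L : List (G.V × G.E)} (f : G.E → Option Bool) {u : G.V}, RChain f u L →
    (u :: L.map Prod.fst).Nodup →
    ∃ g : G.E → Option Bool, ∀ w,
      bal g w = bal f w + ((if u = w then 1 else 0) -
        (if lastV u L = w then 1 else 0)) := by
  intro L
  induction L with
  | nil =>
      intro f u _ _
      exact ⟨f, fun w => by simp [lastV]; split_ifs <;> simp_all⟩
  | cons q rest ih =>
      intro f u hc hnd
      obtain ⟨v, e⟩ := q
      cases hc with
      | cons hstep hrest =>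
        have hnd0 := hnd
        rw [List.map_cons, List.nodup_cons] at hnd0
        -- the edge e does not occur among the edges of rest
        have hedge : ∀ p ∈ rest, p.2 ≠ e := by
          rintro ⟨v', e'⟩ hp rfl
          obtain ⟨w, hw1, hw2, hw3⟩ := rchain_step_ends hrest (v', e') hp
          have h1 : G.ends e' = s(u, v) := hstep.ends_eq'
          rw [h1, Sym2.eq_iff] at hw3
          rcases hw3 with ⟨rfl, rfl⟩ | ⟨rfl, rfl⟩
          · exact hnd0.1 hw1
          · exact hnd0.1 hw2
        have hrest' : RChain (updStep f u e) v rest :=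
          rchain_congr hrest (fun p hp => updStep_apply_ne f u e p.2 (hedge p hp))
        obtain ⟨g, hg⟩ := ih (updStep f u e) hrest' hnd0.2
        refine ⟨g, fun w => ?_⟩
        rw [hg w, bal_updStep hstep w]
        have : lastV u ((v, e) :: rest) = lastV v rest := rfl
        rw [this]
        ring

end MGAux

namespace MGAux

open Multigraph

open scoped Classical

noncomputable local instance (G : Multigraph) : Fintype G.E := Fintype.ofFinite _
noncomputable local instance (G : Multigraph) : Fintype G.V := Fintype.ofFinite _

variable {G : Multigraph}

lemma maxflow (a b : G.V) (hab : a ≠ b) (k : ℕ)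
    (hcut : ∀ U : Set G.V, a ∈ U → b ∉ U → k ≤ (G.edgeCut U).ncard) :
    ∃ f : G.E → Option Bool, bal f a = (k : ℤ) ∧
      ∀ v, v ≠ a → v ≠ b → bal f v = 0 := by
  induction k with
  | zero =>
      refine ⟨fun _ => none, ?_, fun v _ _ => ?_⟩ <;>
        simp [bal, charge]
  | succ k ih =>
      obtain ⟨f, hfa, hfv⟩ := ih (fun U hU hU' => le_trans (Nat.le_succ k)
        (hcut U hU hU'))
      by_cases hreach : Relation.ReflTransGen (Rrel f) a b
      · obtain ⟨L, hL, hlast⟩ := exists_chain hreach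
        obtain ⟨L', hL', hlast', hnd, -⟩ :=
          chain_prune L.length (le_refl _) hL
        rw [hlast] at hlast'
        obtain ⟨g, hg⟩ := augment f hL' hnd
        rw [hlast'] at hg
        refine ⟨g, ?_, fun v hv1 hv2 => ?_⟩
        · rw [hg a, hfa, if_pos rfl, if_neg (Ne.symm hab)]
          push_cast
          ring
        · rw [hg v, hfv v hv1 hv2, if_neg (Ne.symm hv1), if_neg (Ne.symm hv2)]
          ring
      · exfalso
        set U : Set G.V := {v | Relation.ReflTransGen (Rrel f) a v} with hUdef
        set Uf : Finset G.V := (Set.toFinite U).toFinset with hUf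
        set Cf : Finset G.E := (Set.toFinite (G.edgeCut U)).toFinset with hCf
        have haU : a ∈ U := Relation.ReflTransGen.refl
        have hbU : b ∉ U := hreach
        -- the per-edge sum of charges over U
        have hS : ∀ e : G.E, ∑ v ∈ Uf, charge f e v =
            (match f e with
             | none => 0
             | some true => (if efst e ∈ U then 1 else 0) -
                 (if esnd e ∈ U then 1 else 0)
             | some false => (if esnd e ∈ U then 1 else 0) -
                 (if efst e ∈ U then 1 else 0)) := by
          intro e
          unfold charge
          rcases hfe : f e with - | b'
          · simp
          · rcases b' with - | -
            · rw [Finset.sum_sub_distrib]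
              rw [Finset.sum_ite_eq Uf (esnd e) (fun _ => (1:ℤ))]
              rw [Finset.sum_ite_eq Uf (efst e) (fun _ => (1:ℤ))]
              simp [hUf, Set.Finite.mem_toFinset, hUdef, Set.mem_setOf_eq]
            · rw [Finset.sum_sub_distrib]
              rw [Finset.sum_ite_eq Uf (esnd e) (fun _ => (1:ℤ))]
              rw [Finset.sum_ite_eq Uf (efst e) (fun _ => (1:ℤ))]
              simp [hUf, Set.Finite.mem_toFinset, hUdef, Set.mem_setOf_eq]
        -- closure properties of U
        have hclosed : ∀ u v, u ∈ U → Rrel f u v → v ∈ U :=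
          fun u v hu hr => Relation.ReflTransGen.tail hu hr
        -- key: each edge contributes nonnegatively, and cut edges contribute 1
        have hnonneg : ∀ e : G.E, 0 ≤ ∑ v ∈ Uf, charge f e v := by
          intro e
          rw [hS e]
          rcases hfe : f e with - | b'
          · simp
          · rcases b' with - | -
            · -- some false : flow from esnd to efst; residual arc efst → esnd
              by_cases h1 : efst e ∈ U
              · have h2 : esnd e ∈ U := hclosed _ _ h1
                  ⟨e, Or.inr (Or.inr ⟨hfe, rfl, rfl⟩)⟩
                simp [h1, h2]
              · by_cases h2 : esnd e ∈ U <;> simp [h1, h2]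
            · -- some true : residual arc esnd → efst
              by_cases h2 : esnd e ∈ U
              · have h1 : efst e ∈ U := hclosed _ _ h2
                  ⟨e, Or.inr (Or.inl ⟨hfe, rfl, rfl⟩)⟩
                simp [h1, h2]
              · by_cases h1 : efst e ∈ U <;> simp [h1, h2]
        have hcutedge : ∀ e ∈ Cf,
            (1:ℤ) ≤ ∑ v ∈ Uf, charge f e v := by
          intro e he
          rw [Set.Finite.mem_toFinset _] at he
          obtain ⟨p, q, hpq, hp, hq⟩ := he
          rw [hS e]
          rcases hfe : f e with - | b'
          · exfalso
            exact hq (hclosed p q hp ⟨e, Or.inl ⟨hfe, hpq⟩⟩)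
          · rcases ends_cases hpq with ⟨h1, h2⟩ | ⟨h1, h2⟩
            · rcases b' with - | -
              · exfalso
                refine hq ?_
                have h3 : esnd e ∈ U := hclosed _ _ (by rw [h1]; exact hp)
                  ⟨e, Or.inr (Or.inr ⟨hfe, rfl, rfl⟩)⟩
                rwa [h2] at h3
              · rw [if_pos (show efst e ∈ U by rw [h1]; exact hp),
                    if_neg (show esnd e ∉ U by rw [h2]; exact hq)]
                norm_num
            · rcases b' with - | -
              · rw [if_pos (show esnd e ∈ U by rw [h2]; exact hp),
                    if_neg (show efst e ∉ U by rw [h1]; exact hq)]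
                norm_num
              · exfalso
                refine hq ?_
                have h3 : efst e ∈ U := hclosed _ _ (by rw [h2]; exact hp)
                  ⟨e, Or.inr (Or.inl ⟨hfe, rfl, rfl⟩)⟩
                rwa [h1] at h3
        -- total: k = sum over U of bal = sum over edges
        have htot : (k : ℤ) = ∑ e : G.E, ∑ v ∈ Uf, charge f e v := by
          rw [← Finset.sum_comm]
          have : ∑ v ∈ Uf, bal f v = (k : ℤ) := by
            rw [Finset.sum_eq_single_of_mem a ((Set.Finite.mem_toFinset _).2 haU)]
            · exact hfa
            · intro v hv hva
              exact hfv v hva (fun h => hbU (h ▸ (Set.Finite.mem_toFinset _).1 hv))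
          rw [← this]
          rfl
        have hge : (Cf.card : ℤ) ≤
            ∑ e : G.E, ∑ v ∈ Uf, charge f e v := by
          calc (Cf.card : ℤ)
              = ∑ _e ∈ Cf, (1:ℤ) := by simp
            _ ≤ ∑ e ∈ Cf, ∑ v ∈ Uf, charge f e v :=
                Finset.sum_le_sum hcutedge
            _ ≤ ∑ e : G.E, ∑ v ∈ Uf, charge f e v :=
                Finset.sum_le_sum_of_subset_of_nonneg
                  (Finset.subset_univ _) (fun e _ _ => hnonneg e)
        have hcard : (G.edgeCut U).ncard = Cf.card :=
          Set.ncard_eq_toFinset_card _ _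
        have hk1 := hcut U haU hbU
        rw [hcard] at hk1
        have : ((k:ℤ) + 1) ≤ (k:ℤ) := by
          calc ((k:ℤ)+1) = ((k+1 : ℕ) : ℤ) := by push_cast; ring
            _ ≤ (Cf.card : ℤ) := by exact_mod_cast hk1
            _ ≤ _ := hge
            _ = (k:ℤ) := htot.symm
        omega
        -- combine : k ≥ k+1 contradiction
end MGAux

namespace MGAux

open Multigraph

open scoped Classical

noncomputable local instance (G : Multigraph) : Fintype G.E := Fintype.ofFinite _
noncomputable local instance (G : Multigraph) : Fintype G.V := Fintype.ofFinite _

variable {G : Multigraph}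

lemma walk_ne_nil {vs : List G.V} {es : List G.E} (h : G.IsWalk vs es) :
    vs ≠ [] := by
  cases h <;> simp

lemma walk_append {p : List G.V} {ep : List G.E} (hp : G.IsWalk p ep) :
    ∀ {v : G.V} {q : List G.V} {eq : List G.E}, p.getLast? = some v →
    G.IsWalk (v :: q) eq → G.IsWalk (p ++ q) (ep ++ eq) := by
  induction hp with
  | nil v₀ =>
      intro v q eq hlast hq
      simp only [List.getLast?_singleton, Option.some_inj] at hlast
      subst hlast
      simpa using hq
  | @cons v₁ vs es u e he hw ih =>
      intro v q eq hlast hq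
      rw [List.getLast?_cons_cons] at hlast
      have := ih hlast hq
      rw [List.cons_append] at this ⊢
      exact IsWalk.cons u e he (by simpa using this)

lemma walk_reverse {vs : List G.V} {es : List G.E} (h : G.IsWalk vs es) :
    G.IsWalk vs.reverse es.reverse := by
  induction h with
  | nil v => simpa using IsWalk.nil v
  | @cons v vs es u e he hw ih =>
      have hlast : (v :: vs).reverse.getLast? = some v := by
        rw [List.getLast?_reverse]
        rfl
      have h2 : G.IsWalk [v, u] [e] :=
        IsWalk.cons v e (by rw [he]; exact Sym2.eq_swap) (IsWalk.nil u)
      have := walk_append ih hlast h2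
      simpa using this

lemma walk_suffix {vs : List G.V} {es : List G.E} (h : G.IsWalk vs es) :
    ∀ {a : G.V}, a ∈ vs →
    ∃ vs' es', G.IsWalk vs' es' ∧ vs'.head? = some a ∧
      vs'.getLast? = vs.getLast? ∧ vs'.length ≤ vs.length ∧
      (∀ v ∈ vs', v ∈ vs) ∧ (∀ e ∈ es', e ∈ es) := by
  induction h with
  | nil v =>
      intro a ha
      simp only [List.mem_singleton] at ha
      subst ha
      exact ⟨[a], [], IsWalk.nil a, rfl, rfl, le_refl _, by simp, by simp⟩
  | @cons v vs es u e he hw ih =>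
      intro a ha
      by_cases hau : a = u
      · subst hau
        exact ⟨a :: v :: vs, e :: es, IsWalk.cons a e he hw, rfl, rfl,
          le_refl _, fun _ h => h, fun _ h => h⟩
      · have ha' : a ∈ v :: vs := by
          rcases List.mem_cons.1 ha with h | h
          · exact absurd h hau
          · exact h
        obtain ⟨vs', es', h1, h2, h3, h4, h5, h6⟩ := ih ha'
        refine ⟨vs', es', h1, h2, ?_, ?_, ?_, ?_⟩
        · rw [h3, List.getLast?_cons_cons]
        · exact le_trans h4 (by simp)
        · exact fun w hw' => List.mem_cons_of_mem u (h5 w hw')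
        · exact fun e' he' => List.mem_cons_of_mem e (h6 e' he')

lemma walk_to_path : ∀ (n : ℕ) {vs : List G.V} {es : List G.E},
    vs.length ≤ n → G.IsWalk vs es →
    ∃ vs' es', G.IsWalk vs' es' ∧ vs'.Nodup ∧ vs'.head? = vs.head? ∧
      vs'.getLast? = vs.getLast? ∧ (∀ v ∈ vs', v ∈ vs) ∧
      (∀ e ∈ es', e ∈ es) := by
  intro n
  induction n with
  | zero =>
      intro vs es hlen h
      exact absurd (List.length_eq_zero_iff.1 (Nat.le_zero.1 hlen)) (walk_ne_nil h)
  | succ n ih =>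
      intro vs es hlen h
      cases h with
      | nil v =>
          exact ⟨[v], [], IsWalk.nil v, by simp, rfl, rfl, by simp, by simp⟩
      | @cons v vs₀ es₀ u e he hw =>
          by_cases hu : u ∈ v :: vs₀
          · obtain ⟨vs₁, es₁, h1, h2, h3, h4, h5, h6⟩ := walk_suffix hw hu
            have hlen1 : vs₁.length ≤ n := by
              simp only [List.length_cons] at hlen h4
              omega
            obtain ⟨vs', es', g1, g2, g3, g4, g5, g6⟩ := ih hlen1 h1
            refine ⟨vs', es', g1, g2, ?_, ?_, ?_, ?_⟩
            · rw [g3, h2]; rfl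
            · rw [g4, h3, List.getLast?_cons_cons]
            · exact fun w hw' => List.mem_cons_of_mem u (h5 w (g5 w hw'))
            · exact fun e' he' => List.mem_cons_of_mem e (h6 e' (g6 e' he'))
          · have hlen0 : (v :: vs₀).length ≤ n := by
              simp only [List.length_cons] at hlen ⊢
              omega
            obtain ⟨vs', es', g1, g2, g3, g4, g5, g6⟩ := ih hlen0 hw
            obtain ⟨w, rest, rfl⟩ : ∃ w rest, vs' = w :: rest := by
              cases vs' with
              | nil => simp at g3
              | cons w rest => exact ⟨w, rest, rfl⟩
            have hwv : w = v := by
              simp only [List.head?_cons, Option.some_inj] at g3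
              exact g3
            subst hwv
            refine ⟨u :: w :: rest, e :: es', IsWalk.cons u e he g1, ?_, rfl,
              ?_, ?_, ?_⟩
            · rw [List.nodup_cons]
              exact ⟨fun hmem => hu (g5 u hmem), g2⟩
            · simp only [List.getLast?_cons_cons]
              exact g4
            · intro x hx
              rcases List.mem_cons.1 hx with rfl | hx
              · simp
              · exact List.mem_cons_of_mem u (g5 x hx)
            · intro e' he'
              rcases List.mem_cons.1 he' with rfl | he'
              · simp
              · exact List.mem_cons_of_mem e (g6 e' he')

end MGAux

namespace MGAux

open Multigraph

open scoped Classical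

noncomputable local instance (G : Multigraph) : Fintype G.E := Fintype.ofFinite _
noncomputable local instance (G : Multigraph) : Fintype G.V := Fintype.ofFinite _

variable {G : Multigraph}

lemma extract : ∀ (n : ℕ) (f : G.E → Option Bool) (w b : G.V),
    (Finset.univ.filter (fun e => f e ≠ none)).card ≤ n → w ≠ b →
    1 ≤ bal f w → (∀ v, v ≠ w → v ≠ b → 0 ≤ bal f v) →
    ∃ (vs : List G.V) (es : List G.E) (g : G.E → Option Bool),
      G.IsWalk vs es ∧ vs.head? = some w ∧ vs.getLast? = some b ∧
      (∀ e ∈ es, f e ≠ none ∧ g e = none) ∧ (∀ e, e ∉ es → g e = f e) ∧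
      bal g w = bal f w - 1 ∧ (∀ v, v ≠ w → v ≠ b → bal g v = bal f v) := by
  intro n
  induction n with
  | zero =>
      intro f w b hcard hwb hbal _
      exfalso
      have hempty : Finset.univ.filter (fun e => f e ≠ none) = ∅ :=
        Finset.card_eq_zero.1 (Nat.le_zero.1 hcard)
      have hall : ∀ e : G.E, f e = none := by
        intro e
        by_contra h
        have : e ∈ Finset.univ.filter (fun e => f e ≠ none) := by
          simp [h]
        rw [hempty] at this
        simp at this
      have : bal f w = 0 :=
        Finset.sum_eq_zero (fun e _ => charge_none (hall e) w)
      omega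
  | succ n ih =>
      intro f w b hcard hwb hbal hpos
      -- find an out-edge at w
      have hex : ∃ e, 0 < charge f e w := by
        by_contra h
        push_neg at h
        have : bal f w ≤ 0 := Finset.sum_nonpos (fun e _ => h e)
        omega
      obtain ⟨e, he⟩ := hex
      rcases hfe : f e with - | b'
      · rw [charge_none hfe w] at he
        omega
      · -- extract direction : need src = w
        have hsrc : ∃ v : G.V, G.ends e = s(w, v) ∧ v ≠ w ∧
            charge f e w = 1 ∧ charge f e v = -1 ∧
            (∀ v', v' ≠ w → v' ≠ v → charge f e v' = 0) := by
          have hne := efst_ne_esnd (G := G) e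
          rcases b' with - | -
          · -- some false : direction esnd → efst
            have h1 : esnd e = w ∧ ¬ efst e = w := by
              rw [charge_false hfe] at he
              split_ifs at he with u1 u2 u3 <;> first | omega | exact ⟨u1, u2⟩
            refine ⟨efst e, ?_, ?_, ?_, ?_, ?_⟩
            · rw [ends_eq e, h1.1, Sym2.eq_swap]
            · exact h1.2
            · rw [charge_false hfe, if_pos h1.1, if_neg h1.2]; ring
            · rw [charge_false hfe,
                if_neg (show ¬ esnd e = efst e from fun h => h1.2 (by rw [← h, h1.1])),
                if_pos rfl]
              ring
            · intro v' hv1 hv2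
              rw [charge_false hfe, if_neg (by rw [h1.1]; exact fun h => hv1 h.symm),
                if_neg (fun h => hv2 h.symm)]
              ring
          · -- some true : direction efst → esnd
            have h1 : efst e = w ∧ ¬ esnd e = w := by
              rw [charge_true hfe] at he
              split_ifs at he with u1 u2 u3 <;> first | omega | exact ⟨u1, u2⟩
            refine ⟨esnd e, ?_, ?_, ?_, ?_, ?_⟩
            · rw [ends_eq e, h1.1]
            · exact h1.2
            · rw [charge_true hfe, if_pos h1.1, if_neg h1.2]; ring
            · rw [charge_true hfe,
                if_neg (show ¬ efst e = esnd e from fun h => h1.2 (by rw [← h, h1.1])),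
                if_pos rfl]
              ring
            · intro v' hv1 hv2
              rw [charge_true hfe, if_neg (by rw [h1.1]; exact fun h => hv1 h.symm),
                if_neg (fun h => hv2 h.symm)]
              ring
        obtain ⟨v, hends, hvw, hcw, hcv, hc0⟩ := hsrc
        set f₁ : G.E → Option Bool := Function.update f e none with hf₁
        have hf₁e : f₁ e = none := Function.update_self e none f
        have hf₁ne : ∀ e', e' ≠ e → f₁ e' = f e' :=
          fun e' h => Function.update_of_ne h none f
        have hbal₁ : ∀ w', bal f₁ w' = bal f w' - charge f e w' := by
          intro w'
          rw [bal_diff_single e (fun e' h => (hf₁ne e' h).symm) w']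
          rw [charge_none hf₁e w']
          ring
        have hcard₁ : (Finset.univ.filter (fun e' => f₁ e' ≠ none)).card ≤ n := by
          have hsub : Finset.univ.filter (fun e' => f₁ e' ≠ none) ⊆
              (Finset.univ.filter (fun e' => f e' ≠ none)).erase e := by
            intro e' he'
            simp only [Finset.mem_filter, Finset.mem_univ, true_and] at he'
            rw [Finset.mem_erase]
            refine ⟨?_, ?_⟩
            · rintro rfl; exact he' hf₁e
            · simp only [Finset.mem_filter, Finset.mem_univ, true_and]
              intro h0
              exact he' (by rw [hf₁ne e' (by rintro rfl; exact he' hf₁e), h0])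
          have hmem : e ∈ Finset.univ.filter (fun e' => f e' ≠ none) := by
            simp [hfe]
          have := Finset.card_le_card hsub
          rw [Finset.card_erase_of_mem hmem] at this
          omega
        by_cases hvb : v = b
        · subst hvb
          refine ⟨[w, v], [e], f₁, IsWalk.cons w e hends (IsWalk.nil v), rfl,
            rfl, ?_, ?_, ?_, ?_⟩
          · intro e' he'
            simp only [List.mem_singleton] at he'
            subst he'
            exact ⟨by rw [hfe]; simp, hf₁e⟩
          · intro e' he'
            simp only [List.mem_singleton] at he'
            exact hf₁ne e' he'
          · rw [hbal₁ w, hcw]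
          · intro v' h1 h2
            rw [hbal₁ v', hc0 v' h1 h2]
            ring
        · obtain ⟨vs₁, es₁, g, k1, k2, k3, k4, k5, k6, k7⟩ :=
            ih f₁ v b hcard₁ hvb
              (by rw [hbal₁ v, hcv]; have := hpos v hvw hvb; omega)
              (by
                intro v' h1 h2
                by_cases hvw' : v' = w
                · subst hvw'
                  rw [hbal₁ v', hcw]
                  omega
                · rw [hbal₁ v', hc0 v' hvw' h1]
                  have := hpos v' hvw' h2
                  omega)
          obtain ⟨w₁, rest, rfl⟩ : ∃ w₁ rest, vs₁ = w₁ :: rest := by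
            cases vs₁ with
            | nil => simp at k2
            | cons w₁ rest => exact ⟨w₁, rest, rfl⟩
          have hw₁ : v = w₁ := (show w₁ = v by simpa using k2).symm
          subst hw₁
          have hemem : e ∉ es₁ := by
            intro hmem
            exact (k4 e hmem).1 hf₁e
          refine ⟨w :: v :: rest, e :: es₁, g, IsWalk.cons w e hends k1, rfl,
            ?_, ?_, ?_, ?_, ?_⟩
          · simp only [List.getLast?_cons_cons]
            exact k3
          · intro e' he'
            rcases List.mem_cons.1 he' with rfl | hin
            · refine ⟨by rw [hfe]; simp, ?_⟩
              rw [k5 e' hemem, hf₁e]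
            · have h1 := k4 e' hin
              refine ⟨?_, h1.2⟩
              intro h0
              have hne' : e' ≠ e := fun hh => hemem (hh ▸ hin)
              rw [← hf₁ne e' hne'] at h0
              exact h1.1 h0
          · intro e' he'
            simp only [List.mem_cons, not_or] at he'
            rw [k5 e' he'.2, hf₁ne e' he'.1]
          · have hwv : w ≠ v := Ne.symm hvw
            rw [k7 w hwv hwb, hbal₁ w, hcw]
          · intro v' h1 h2
            by_cases hv' : v' = v
            · subst hv'
              rw [k6, hbal₁ v', hcv]
              ring
            · rw [k7 v' hv' h2, hbal₁ v', hc0 v' h1 hv']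
              ring

lemma decompose : ∀ (m : ℕ) (f : G.E → Option Bool) (a b : G.V), a ≠ b →
    bal f a = (m : ℤ) → (∀ v, v ≠ a → v ≠ b → bal f v = 0) →
    ∃ (vs : Fin m → List G.V) (es : Fin m → List G.E),
      (∀ i, G.IsWalk (vs i) (es i) ∧ (vs i).head? = some a ∧
        (vs i).getLast? = some b) ∧
      (∀ i, ∀ e ∈ es i, f e ≠ none) ∧
      (∀ i j, i ≠ j → ∀ e, e ∈ es i → e ∉ es j) := by
  intro m
  induction m with
  | zero =>
      intro f a b _ _ _
      exact ⟨fun i => Fin.elim0 i, fun i => Fin.elim0 i,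
        fun i => Fin.elim0 i, fun i => Fin.elim0 i, fun i => Fin.elim0 i⟩
  | succ m ih =>
      intro f a b hab hval hcons
      obtain ⟨vs₀, es₀, g, k1, k2, k3, k4, k5, k6, k7⟩ :=
        extract (Fintype.card G.E) f a b (Finset.card_filter_le _ _) hab
          (by rw [hval]; push_cast; omega) (fun v h1 h2 => le_of_eq
            (hcons v h1 h2).symm)
      obtain ⟨vs', es', g1, g2, g3⟩ := ih g a b hab
        (by rw [k6, hval]; push_cast; ring)
        (fun v h1 h2 => by rw [k7 v h1 h2]; exact hcons v h1 h2)
      refine ⟨Fin.cons vs₀ vs', Fin.cons es₀ es', ?_, ?_, ?_⟩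
      · intro i
        refine Fin.cases ?_ ?_ i
        · simpa using ⟨k1, k2, k3⟩
        · intro j
          simpa using g1 j
      · intro i
        refine Fin.cases ?_ ?_ i
        · intro e he
          simpa using (k4 e (by simpa using he)).1
        · intro j e he
          simp only [Fin.cons_succ] at he
          have hg := g2 j e he
          have hne : e ∉ es₀ := by
            intro h0
            exact hg (k4 e h0).2
          rw [← k5 e hne]
          exact hg
      · intro i j hij e hei hej
        induction i using Fin.cases with
        | zero =>
            induction j using Fin.cases with
            | zero => exact hij rfl
            | succ j' =>
                simp only [Fin.cons_zero] at hei
                simp only [Fin.cons_succ] at hej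
                exact (g2 j' e hej) (k4 e hei).2
        | succ i' =>
            induction j using Fin.cases with
            | zero =>
                simp only [Fin.cons_succ] at hei
                simp only [Fin.cons_zero] at hej
                exact (g2 i' e hei) (k4 e hej).2
            | succ j' =>
                simp only [Fin.cons_succ] at hei hej
                exact g3 i' j' (fun h => hij (by rw [h])) e hei hej

end MGAux

namespace MGAux

open Multigraph

open scoped Classical

noncomputable local instance (G : Multigraph) : Fintype G.E := Fintype.ofFinite _
noncomputable local instance (G : Multigraph) : Fintype G.V := Fintype.ofFinite _

variable {G : Multigraph}

lemma walk_cons_inv {u v : G.V} {vs : List G.V} {es : List G.E}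
    (h : G.IsWalk (u :: v :: vs) es) :
    ∃ e es₀, es = e :: es₀ ∧ G.ends e = s(u, v) ∧ G.IsWalk (v :: vs) es₀ := by
  cases h with
  | cons _ e he hw => exact ⟨e, _, rfl, he, hw⟩

def pairIdx (t : ℕ) (i j : Fin t) (_ : (i : ℕ) ≠ (j : ℕ)) : Fin (t - 1) :=
  if hj : (j : ℕ) < (i : ℕ) then
    ⟨(j : ℕ), by have h1 := i.isLt; have h2 := j.isLt; omega⟩
  else ⟨(j : ℕ) - 1, by have h1 := i.isLt; have h2 := j.isLt; omega⟩

lemma pairIdx_inj {t : ℕ} {i j j' : Fin t} {h : (i : ℕ) ≠ (j : ℕ)}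
    {h' : (i : ℕ) ≠ (j' : ℕ)} (he : pairIdx t i j h = pairIdx t i j' h') :
    j = j' := by
  have hj := j.isLt
  have hj' := j'.isLt
  apply Fin.ext
  unfold pairIdx at he
  split_ifs at he <;>
    (have h2 := congrArg Fin.val he; simp only [] at h2; omega)

lemma pairIdx_inj' {t : ℕ} {i i' j j' : Fin t} {h : (i : ℕ) ≠ (j : ℕ)}
    {h' : (i' : ℕ) ≠ (j' : ℕ)} (hii : i = i')
    (he : ((pairIdx t i j h : Fin (t - 1)) : ℕ) =
      ((pairIdx t i' j' h' : Fin (t - 1)) : ℕ)) : j = j' := by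
  subst hii
  have hj := j.isLt
  have hj' := j'.isLt
  apply Fin.ext
  unfold pairIdx at he
  split_ifs at he <;> (simp only [] at he; omega)

/-- the auxiliary graph : `G` plus a source `none` joined by `t-1` parallel
edges to each of the terminals `x 1, …, x t`. -/
@[reducible] noncomputable def auxG (G : Multigraph) (t : ℕ) (x : Fin (t + 1) → G.V) :
    Multigraph where
  V := Option G.V
  E := G.E ⊕ (Fin t × Fin (t - 1))
  finV := inferInstance
  finE := inferInstance
  ends := fun e => Sum.rec (fun e => (G.ends e).map some)
    (fun p => s((none : Option G.V), some (x p.1.succ))) e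
  no_loops := by
    rintro (e | p) hd
    · have h := G.no_loops e
      obtain ⟨u, v, huv⟩ := sym2_rep (G.ends e)
      rw [huv] at h
      simp only [huv] at hd
      rw [Sym2.map_pair_eq] at hd
      rw [Sym2.mk_isDiag_iff] at h hd
      exact h (Option.some_injective _ hd)
    · rw [Sym2.mk_isDiag_iff] at hd
      simp at hd

@[simp] lemma auxG_ends_inl (G : Multigraph) (t : ℕ) (x : Fin (t + 1) → G.V)
    (e : G.E) : (auxG G t x).ends (Sum.inl e) = (G.ends e).map some := rfl

@[simp] lemma auxG_ends_inr (G : Multigraph) (t : ℕ) (x : Fin (t + 1) → G.V)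
    (p : Fin t × Fin (t - 1)) :
    (auxG G t x).ends (Sum.inr p) = s((none : Option G.V), some (x p.1.succ)) := rfl

lemma auxG_descend {t : ℕ} {x : Fin (t + 1) → G.V} :
    ∀ {vs : List (auxG G t x).V} {es : List (auxG G t x).E},
    (auxG G t x).IsWalk vs es → (∀ v ∈ vs, v ≠ none) →
    ∃ (vsg : List G.V) (esg : List G.E), G.IsWalk vsg esg ∧
      vs = vsg.map some ∧ es = esg.map Sum.inl := by
  intro vs es h
  induction h with
  | nil v =>
      intro hv
      obtain ⟨u, rfl⟩ := Option.ne_none_iff_exists'.1 (hv v (by simp))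
      exact ⟨[u], [], IsWalk.nil u, rfl, rfl⟩
  | @cons v vs₀ es₀ u e he hw ih =>
      intro hv
      obtain ⟨vsg, esg, h1, h2, h3⟩ := ih (fun w hw' => hv w (by simp [hw']))
      obtain ⟨vg, vsg₀, rfl⟩ : ∃ vg vsg₀, vsg = vg :: vsg₀ := by
        cases vsg with
        | nil => simp at h2
        | cons vg vsg₀ => exact ⟨vg, vsg₀, rfl⟩
      rw [List.map_cons] at h2
      obtain ⟨hveq, hvs⟩ := List.cons_eq_cons.1 h2
      obtain ⟨ug, rfl⟩ := Option.ne_none_iff_exists'.1 (hv u (by simp))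
      rcases e with eg | p
      · rw [auxG_ends_inl] at he
        have hge : G.ends eg = s(ug, vg) := by
          apply Sym2.map.injective (Option.some_injective G.V)
          rw [he, hveq, Sym2.map_pair_eq]
        refine ⟨ug :: vg :: vsg₀, eg :: esg, IsWalk.cons ug eg hge h1, ?_, ?_⟩
        · rw [List.map_cons, List.map_cons, ← hveq, ← hvs]
        · rw [List.map_cons, h3]
      · rw [auxG_ends_inr] at he
        rw [Sym2.eq_iff] at he
        rcases he with ⟨h4, -⟩ | ⟨h4, -⟩
        · exact absurd h4.symm (hv (some ug) (by simp))
        · exact absurd h4.symm (hv v (by simp))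

end MGAux

open Multigraph in
/-- if `G` has `t+1` vertices that are pairwise not separated by any
edge cut of order less than `t²`, then `G` admits a weak immersion of `K_t`. -/
theorem immerses_clique_of_highly_edge_connected_set (t : ℕ) (ht : 1 ≤ t)
    (G : Multigraph) (X : Set G.V) (hX : X.ncard = t + 1)
    (hcut : ∀ x ∈ X, ∀ y ∈ X, x ≠ y →
      ∀ U : Set G.V, x ∈ U → y ∉ U → t ^ 2 ≤ (G.edgeCut U).ncard) :
    G.Immerses (completeGraph t) := by
  classical
  -- choose the terminals
  have hXfin : X.Finite := Set.toFinite X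
  have hcardX : hXfin.toFinset.card = t + 1 := by
    rw [← Set.ncard_eq_toFinset_card X hXfin]
    exact hX
  let eqv : ↥hXfin.toFinset ≃ Fin (t + 1) := Finset.equivFinOfCardEq hcardX
  set x : Fin (t + 1) → G.V := fun i => ((eqv.symm i : ↥hXfin.toFinset) : G.V)
    with hxdef
  have hxinj : Function.Injective x := fun i j hij =>
    eqv.symm.injective (Subtype.ext hij)
  have hxX : ∀ i, x i ∈ X := fun i =>
    (Set.Finite.mem_toFinset hXfin).1 (eqv.symm i).2
  set m : ℕ := t * (t - 1) with hm
  set H : Multigraph := MGAux.auxG G t x with hH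
  -- the cut condition in the auxiliary graph
  have hcut' : ∀ U' : Set H.V, none ∈ U' → some (x 0) ∉ U' →
      m ≤ (H.edgeCut U').ncard := by
    intro U' h0 h1
    set U : Set G.V := {v | some v ∈ U'} with hU
    by_cases hcase : ∃ j : Fin t, x j.succ ∈ U
    · obtain ⟨j, hj⟩ := hcase
      have hne : x j.succ ≠ x 0 := fun h => Fin.succ_ne_zero j (hxinj h)
      have h2 := hcut (x j.succ) (hxX _) (x 0) (hxX _) hne U hj h1
      have h3 : (G.edgeCut U).ncard ≤ (H.edgeCut U').ncard := by
        have hsub : Sum.inl '' (G.edgeCut U) ⊆ H.edgeCut U' := by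
          rintro - ⟨e, ⟨p, q, hpq, hp, hq⟩, rfl⟩
          refine ⟨some p, some q, ?_, hp, hq⟩
          show (MGAux.auxG G t x).ends (Sum.inl e) = _
          rw [MGAux.auxG_ends_inl, hpq, Sym2.map_pair_eq]
        calc (G.edgeCut U).ncard = (Sum.inl '' (G.edgeCut U)).ncard :=
              (Set.ncard_image_of_injective _ Sum.inl_injective).symm
          _ ≤ (H.edgeCut U').ncard := Set.ncard_le_ncard hsub (Set.toFinite _)
      have h4 : m ≤ t ^ 2 := by
        rw [hm, pow_two]
        exact Nat.mul_le_mul_left t (Nat.sub_le t 1)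
      omega
    · push_neg at hcase
      have hsub : Set.range (Sum.inr : (Fin t × Fin (t - 1)) → H.E) ⊆
          H.edgeCut U' := by
        rintro - ⟨⟨i, k⟩, rfl⟩
        exact ⟨none, some (x i.succ), rfl, h0, fun hmem => hcase i hmem⟩
      calc m = (Set.range (Sum.inr : (Fin t × Fin (t - 1)) → H.E)).ncard := by
            rw [← Set.image_univ, Set.ncard_image_of_injective _ Sum.inr_injective,
              Set.ncard_univ, Nat.card_eq_fintype_card, Fintype.card_prod,
              Fintype.card_fin, Fintype.card_fin]
        _ ≤ (H.edgeCut U').ncard := Set.ncard_le_ncard hsub (Set.toFinite _)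
  -- a flow of value m in H, decomposed into m edge-disjoint walks
  obtain ⟨fl, hfl1, hfl2⟩ := MGAux.maxflow (G := H) none (some (x 0))
    (by simp) m hcut'
  obtain ⟨wvs, wes, hwalks, hsupp, hdisj⟩ := MGAux.decompose m fl none
    (some (x 0)) (by simp) hfl1 hfl2
  -- turn the walks into paths
  have hp : ∀ n : Fin m, ∃ (vsp : List H.V) (esp : List H.E),
      H.IsWalk vsp esp ∧ vsp.Nodup ∧ vsp.head? = some none ∧
      vsp.getLast? = some (some (x 0)) ∧ ∀ e ∈ esp, e ∈ wes n := by
    intro n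
    obtain ⟨h1, h2, h3⟩ := hwalks n
    obtain ⟨vs', es', g1, g2, g3, g4, g5, g6⟩ :=
      MGAux.walk_to_path (wvs n).length le_rfl h1
    exact ⟨vs', es', g1, g2, by rw [g3, h2], by rw [g4, h3], g6⟩
  choose pvs pes hp1 hp2 hp3 hp4 hp5 using hp
  -- each path starts with a unique source edge and descends to a fan path in G
  have hsrc : ∀ n : Fin m, ∃ (p : Fin t × Fin (t - 1)) (vsg : List G.V)
      (esg : List G.E), Sum.inr p ∈ pes n ∧ G.IsWalk vsg esg ∧
      vsg.head? = some (x p.1.succ) ∧ vsg.getLast? = some (x 0) ∧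
      ∀ e ∈ esg, Sum.inl e ∈ pes n := by
    intro n
    have h1 := hp1 n
    have h2 := hp2 n
    have h3 := hp3 n
    have h4 := hp4 n
    obtain ⟨v₀, rest, hveq⟩ : ∃ v₀ rest, pvs n = v₀ :: rest := by
      cases hvp : pvs n with
      | nil => rw [hvp] at h3; simp at h3
      | cons a b => exact ⟨a, b, rfl⟩
    rw [hveq] at h1 h2 h3 h4
    have hv₀ : v₀ = none := by simpa using h3
    subst hv₀
    obtain ⟨v₁, rest₁, hreq⟩ : ∃ v₁ rest₁, rest = v₁ :: rest₁ := by
      cases hr : rest with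
      | nil => rw [hr] at h4; simp at h4
      | cons a b => exact ⟨a, b, rfl⟩
    rw [hreq] at h1 h2 h4
    obtain ⟨e₀, es₀, heq, hends, hw⟩ := MGAux.walk_cons_inv h1
    rcases e₀ with eg | p
    · exfalso
      have hends' : Sym2.map some (G.ends eg) = s(none, v₁) := hends
      obtain ⟨pp, qq, hpq⟩ := MGAux.sym2_rep (G.ends eg)
      rw [hpq, Sym2.map_pair_eq, Sym2.eq_iff] at hends'
      rcases hends' with ⟨hx, -⟩ | ⟨-, hx⟩ <;> simp at hx
    · have hends' : s((none : Option G.V), some (x p.1.succ)) = s(none, v₁) :=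
        hends
      rw [Sym2.eq_iff] at hends'
      have hv₁ : v₁ = some (x p.1.succ) := by
        rcases hends' with ⟨-, hx⟩ | ⟨-, hx⟩
        · exact hx.symm
        · simp at hx
      have hnone : ∀ v ∈ v₁ :: rest₁, v ≠ none := by
        intro v hv hvn
        subst hvn
        rw [List.nodup_cons] at h2
        exact h2.1 hv
      obtain ⟨vsg, esg, g1, g2, g3⟩ := MGAux.auxG_descend hw hnone
      refine ⟨p, vsg, esg, by rw [heq]; simp, g1, ?_, ?_, ?_⟩
      · have hh : (v₁ :: rest₁).head? = some v₁ := rfl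
        rw [g2, List.head?_map, hv₁] at hh
        cases hgg : vsg.head? with
        | none => rw [hgg] at hh; simp at hh
        | some a =>
            rw [hgg] at hh
            simp only [Option.map_some, Option.some_inj] at hh
            rw [hh]
      · have h4' := h4
        rw [List.getLast?_cons_cons, g2, List.getLast?_map] at h4'
        cases hgg : vsg.getLast? with
        | none => rw [hgg] at h4'; simp at h4'
        | some a =>
            rw [hgg] at h4'
            simp only [Option.map_some, Option.some_inj] at h4'
            rw [h4']
      · intro e he
        have hmem : Sum.inl e ∈ List.map (Sum.inl : G.E → H.E) esg :=
          List.mem_map_of_mem he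
        rw [← g3] at hmem
        rw [heq]
        exact List.mem_cons_of_mem _ hmem
  choose σ pvg peg hσ hgw hghead hglast hgmem using hsrc
  -- σ is a bijection onto the source-edge indices
  have hσinj : Function.Injective σ := by
    intro n n' h
    by_contra hne
    exact hdisj n n' hne (Sum.inr (σ n)) (hp5 n _ (hσ n))
      (by rw [h]; exact hp5 n' _ (hσ n'))
  have hσbij : Function.Bijective σ :=
    (Fintype.bijective_iff_injective_and_card σ).2 ⟨hσinj, by simp [hm]⟩
  let eqm : Fin m ≃ (Fin t × Fin (t - 1)) := Equiv.ofBijective σ hσbij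
  have heqm : ∀ p, σ (eqm.symm p) = p := fun p => eqm.apply_symm_apply p
  have hpegdisj : ∀ n n' : Fin m, ∀ e, e ∈ peg n → e ∈ peg n' → n = n' := by
    intro n n' e h h'
    by_contra hne
    exact hdisj n n' hne (Sum.inl e) (hp5 n _ (hgmem n e h))
      (hp5 n' _ (hgmem n' e h'))
  -- build, for each edge of `K_t`, a connecting path in `G`
  have key : ∀ f : (completeGraph t).E, ∃ (vsf : List G.V) (esf : List G.E)
      (i j : Fin t), (completeGraph t).ends f = s(i, j) ∧
      ∃ hij : (i : ℕ) ≠ (j : ℕ),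
        G.IsPathBetween (x i.succ) (x j.succ) vsf esf ∧
        ∀ e ∈ esf, e ∈ peg (eqm.symm (i, MGAux.pairIdx t i j hij)) ∨
          e ∈ peg (eqm.symm (j, MGAux.pairIdx t j i (Ne.symm hij))) := by
    intro f
    obtain ⟨i, j, hij⟩ := MGAux.sym2_rep (α := Fin t) ((completeGraph t).ends f)
    have hne : i ≠ j := by
      have hf := f.prop
      rw [show f.val = (completeGraph t).ends f from rfl, hij,
        Sym2.mk_isDiag_iff] at hf
      exact hf
    have hv : (i : ℕ) ≠ (j : ℕ) := fun h => hne (Fin.ext h)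
    set n₁ := eqm.symm (i, MGAux.pairIdx t i j hv) with hn₁
    set n₂ := eqm.symm (j, MGAux.pairIdx t j i (Ne.symm hv)) with hn₂
    have hh₁ : (pvg n₁).head? = some (x i.succ) := by
      have h0 : σ n₁ = (i, MGAux.pairIdx t i j hv) := heqm _
      have := hghead n₁
      rw [h0] at this
      exact this
    have hh₂ : (pvg n₂).head? = some (x j.succ) := by
      have h0 : σ n₂ = (j, MGAux.pairIdx t j i (Ne.symm hv)) := heqm _
      have := hghead n₂
      rw [h0] at this
      exact this
    have hrev := MGAux.walk_reverse (hgw n₂)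
    have hrevhead : (pvg n₂).reverse.head? = some (x 0) := by
      rw [List.head?_reverse]
      exact hglast n₂
    obtain ⟨q, hq⟩ : ∃ q, (pvg n₂).reverse = x 0 :: q := by
      cases hr : (pvg n₂).reverse with
      | nil => rw [hr] at hrevhead; simp at hrevhead
      | cons a b =>
          rw [hr] at hrevhead
          simp only [List.head?_cons, Option.some_inj] at hrevhead
          rw [hrevhead]
          exact ⟨b, rfl⟩
    rw [hq] at hrev
    have hW := MGAux.walk_append (hgw n₁) (hglast n₁) hrev
    have hq_ne : q ≠ [] := by
      rintro rfl
      have hpv : pvg n₂ = [x 0] := by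
        have := congrArg List.reverse hq
        rwa [List.reverse_reverse] at this
      rw [hpv] at hh₂
      simp only [List.head?_cons, Option.some_inj] at hh₂
      exact Fin.succ_ne_zero j (hxinj hh₂.symm)
    have hWlast : (pvg n₁ ++ q).getLast? = some (x j.succ) := by
      rw [List.getLast?_append_of_ne_nil _ hq_ne]
      have hcons : (x 0 :: q).getLast? = q.getLast? := by
        cases q with
        | nil => exact absurd rfl hq_ne
        | cons c q' => rw [List.getLast?_cons_cons]
      rw [← hcons, ← hq, List.getLast?_reverse]
      exact hh₂
    have hWhead : (pvg n₁ ++ q).head? = some (x i.succ) := by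
      cases hv1 : pvg n₁ with
      | nil => rw [hv1] at hh₁; simp at hh₁
      | cons a b =>
          rw [hv1] at hh₁
          rw [List.cons_append]
          simpa using hh₁
    obtain ⟨vs', es', g1, g2, g3, g4, g5, g6⟩ :=
      MGAux.walk_to_path (pvg n₁ ++ q).length le_rfl hW
    refine ⟨vs', es', i, j, hij, hv,
      ⟨g1, g2, by rw [g3]; exact hWhead, by rw [g4]; exact hWlast⟩, ?_⟩
    intro e he
    have hmem := g6 e he
    rw [List.mem_append] at hmem
    rcases hmem with h | h
    · exact Or.inl h
    · exact Or.inr (List.mem_reverse.1 h)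
  choose vsf esf ci cj hcv hkey using key
  refine ⟨⟨fun i => x i.succ, fun i j h => Fin.succ_inj.1 (hxinj h),
    vsf, esf, ?_, ?_⟩⟩
  · intro f
    obtain ⟨hij, hpath, -⟩ := hkey f
    exact ⟨ci f, cj f, hcv f, hpath⟩
  · intro f f' hne e hef hef'
    obtain ⟨hij, -, hmem⟩ := hkey f
    obtain ⟨hij', -, hmem'⟩ := hkey f'
    apply hne
    have hval : (completeGraph t).ends f = (completeGraph t).ends f' → f = f' :=
      fun h => Subtype.ext h
    apply hval
    rw [hcv f, hcv f']
    rcases hmem e hef with h1 | h1 <;> rcases hmem' e hef' with h2 | h2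
    · have hn := hpegdisj _ _ e h1 h2
      obtain ⟨ha, hb⟩ := Prod.ext_iff.1 (eqm.symm.injective hn)
      have ha' : ci f = ci f' := ha
      have hj := @MGAux.pairIdx_inj' t _ _ _ _ hij hij' ha' (congrArg Fin.val hb)
      rw [ha', hj]
    · have hn := hpegdisj _ _ e h1 h2
      obtain ⟨ha, hb⟩ := Prod.ext_iff.1 (eqm.symm.injective hn)
      have ha' : ci f = cj f' := ha
      have hj := @MGAux.pairIdx_inj' t _ _ _ _ hij (Ne.symm hij') ha'
        (congrArg Fin.val hb)
      rw [ha', hj]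
      exact Sym2.eq_swap
    · have hn := hpegdisj _ _ e h1 h2
      obtain ⟨ha, hb⟩ := Prod.ext_iff.1 (eqm.symm.injective hn)
      have ha' : cj f = ci f' := ha
      have hj := @MGAux.pairIdx_inj' t _ _ _ _ (Ne.symm hij) hij' ha'
        (congrArg Fin.val hb)
      rw [hj, ha']
      exact Sym2.eq_swap
    · have hn := hpegdisj _ _ e h1 h2
      obtain ⟨ha, hb⟩ := Prod.ext_iff.1 (eqm.symm.injective hn)
      have ha' : cj f = cj f' := ha
      have hj := @MGAux.pairIdx_inj' t _ _ _ _ (Ne.symm hij) (Ne.symm hij') ha'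
        (congrArg Fin.val hb)
      rw [ha', hj]
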